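/- For all integers q ≥ 2 and n ≥ 2, every single-deletion-covering code C ⊆ Σ_q^n satisfies |C| ≥ q^n (n−2) / ((q−1) n (n+1)); equivalently, K_D^q(n,1) ≥ q^n(n−2)/((q−1)n(n+1)). -/

import Mathlib

open Finset

/-! Auxiliary definitions and lemmas for the sphere-covering lower bound for
single-deletion-covering codes.  The key idea: give each word `y` of length `n-1`
the weight `1/(runs y + 2) = 1/(dcount y + 3)`; every codeword `c` covers at most
`dcount c + 1` distinct words, each of weight at most `1/(dcount c + 1)`,
so each codeword absorbs total weight at most `1`. -/

/-- number of adjacent unequal pairs of a list -/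
def dcount {α : Type*} [DecidableEq α] : List α → ℕ
  | a :: b :: t => (if a = b then 0 else 1) + dcount (b :: t)
  | _ => 0

@[simp] lemma dcount_nil {α : Type*} [DecidableEq α] : dcount ([] : List α) = 0 := rfl
@[simp] lemma dcount_single {α : Type*} [DecidableEq α] (a : α) : dcount [a] = 0 := rfl
lemma dcount_cons_cons {α : Type*} [DecidableEq α] (a b : α) (t : List α) :
    dcount (a :: b :: t) = (if a = b then 0 else 1) + dcount (b :: t) := rfl

/-- all lists of a given length over `Fin q` -/
def Lset (q : ℕ) : ℕ → Finset (List (Fin q))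
  | 0 => {[]}
  | m + 1 => (Finset.univ ×ˢ Lset q m).image fun p => p.1 :: p.2

lemma mem_Lset {q : ℕ} : ∀ {m : ℕ} {y : List (Fin q)}, y ∈ Lset q m ↔ y.length = m
  | 0, y => by
      constructor
      · intro h; simp [Lset] at h; simp [h]
      · intro h; simp [Lset, List.length_eq_zero_iff.mp h]
  | m + 1, y => by
      constructor
      · intro h
        simp only [Lset, Finset.mem_image] at h
        obtain ⟨p, hp, rfl⟩ := h
        simp only [Finset.mem_product] at hp
        simp [mem_Lset.mp hp.2]
      · intro h
        cases y with
        | nil => simp at h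
        | cons a l =>
          simp only [Lset, Finset.mem_image]
          refine ⟨(a, l), ?_, rfl⟩
          simp only [Finset.mem_product, Finset.mem_univ, true_and]
          exact mem_Lset.mpr (by simpa using h)

/-- every sublist one shorter is an `eraseIdx` -/
lemma sublist_eq_eraseIdx {α : Type*} {y c : List α} (h : y.Sublist c)
    (hl : y.length + 1 = c.length) : ∃ i < c.length, y = c.eraseIdx i := by
  induction h with
  | slnil => simp at hl
  | @cons l₁ l₂ a h ih =>
      have : l₁ = l₂ := h.eq_of_length (by simpa using hl)
      exact ⟨0, by simp, by simp [this]⟩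
  | @cons_cons l₁ l₂ a h ih =>
      obtain ⟨i, hi, hy⟩ := ih (by simpa using hl)
      exact ⟨i + 1, by simpa using hi, by simp [hy]⟩

/-- deleting one symbol decreases `dcount` by at most 2 -/
theorem dcount_le_eraseIdx {α : Type*} [DecidableEq α] :
    ∀ (l : List α) (i : ℕ), dcount l ≤ dcount (l.eraseIdx i) + 2
  | [], _ => by simp
  | [a], i => by cases i <;> simp
  | a :: b :: t, 0 => by
      rw [List.eraseIdx_cons_zero, dcount_cons_cons]
      split_ifs <;> omega
  | a :: b :: t, 1 => by
      cases t with
      | nil =>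
          simp only [List.eraseIdx_cons_succ, List.eraseIdx_cons_zero, dcount_cons_cons,
            dcount_single]
          split_ifs <;> omega
      | cons cc t' =>
          simp only [List.eraseIdx_cons_succ, List.eraseIdx_cons_zero, dcount_cons_cons]
          split_ifs <;> omega
  | a :: b :: t, (i+2) => by
      have h := dcount_le_eraseIdx (b :: t) (i+1)
      simp only [List.eraseIdx_cons_succ, dcount_cons_cons] at *
      split_ifs <;> omega

/-- the set of all one-symbol deletions of `c` -/
def Dset {α : Type*} [DecidableEq α] (c : List α) : Finset (List α) :=
  (Finset.range c.length).image c.eraseIdx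

/-- a word has at most `runs = dcount + 1` distinct one-symbol deletions -/
theorem card_Dset_le {α : Type*} [DecidableEq α] :
    ∀ c : List α, c ≠ [] → (Dset c).card ≤ dcount c + 1
  | [], h => absurd rfl h
  | [a], _ => by
      simp only [Dset, List.length_singleton, Finset.range_one, Finset.image_singleton]
      simp
  | a :: b :: t, _ => by
      set l : List α := b :: t with hl
      have hsub : Dset (a :: l) ⊆ insert l ((Dset l).image (a :: ·)) := by
        intro y hy
        simp only [Dset, Finset.mem_image, Finset.mem_range] at hy
        obtain ⟨i, hi, rfl⟩ := hy
        cases i with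
        | zero => simp
        | succ j =>
            simp only [Finset.mem_insert, List.eraseIdx_cons_succ, Finset.mem_image]
            right
            refine ⟨l.eraseIdx j, ?_, rfl⟩
            simp only [Dset, Finset.mem_image, Finset.mem_range]
            exact ⟨j, by simpa using hi, rfl⟩
      have hcard_l : (Dset l).card ≤ dcount l + 1 := card_Dset_le l (by simp [hl])
      by_cases hab : a = b
      · have hmem : l ∈ (Dset l).image (a :: ·) := by
          refine Finset.mem_image.mpr ⟨t, ?_, by simp [hl, hab]⟩
          simp only [Dset, Finset.mem_image, Finset.mem_range]
          exact ⟨0, by simp [hl], rfl⟩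
        have hsub' : Dset (a :: l) ⊆ (Dset l).image (a :: ·) := by
          intro y hy
          rcases Finset.mem_insert.mp (hsub hy) with h | h
          · rw [h]; exact hmem
          · exact h
        have : (Dset (a :: l)).card ≤ (Dset l).card :=
          le_trans (Finset.card_le_card hsub') Finset.card_image_le
        rw [dcount_cons_cons, if_pos hab, ← hl]
        omega
      · have h1 : (Dset (a :: l)).card ≤ ((Dset l).image (a :: ·)).card + 1 :=
          le_trans (Finset.card_le_card hsub) (Finset.card_insert_le _ _)
        have h2 : ((Dset l).image (a :: ·)).card ≤ (Dset l).card := Finset.card_image_le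
        rw [dcount_cons_cons, if_neg hab, ← hl]
        omega

lemma sum_Lset_succ (q : ℕ) (m : ℕ) (f : List (Fin q) → ℝ) :
    ∑ y ∈ Lset q (m + 1), f y = ∑ l ∈ Lset q m, ∑ a : Fin q, f (a :: l) := by
  have hinj : ∀ x ∈ Finset.univ ×ˢ Lset q m, ∀ y ∈ Finset.univ ×ˢ Lset q m,
      (fun p : Fin q × List (Fin q) => p.1 :: p.2) x
        = (fun p : Fin q × List (Fin q) => p.1 :: p.2) y → x = y := by
    intro x _ y _ hxy
    simp only [List.cons.injEq] at hxy
    exact Prod.ext hxy.1 hxy.2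
  rw [show Lset q (m + 1) = (Finset.univ ×ˢ Lset q m).image fun p => p.1 :: p.2 from rfl,
    Finset.sum_image hinj, Finset.sum_product]
  exact Finset.sum_comm

lemma sum_fin_cons (q : ℕ) (hq : 1 ≤ q) (g : ℕ → ℝ) (b : Fin q) (t : List (Fin q)) :
    ∑ a : Fin q, g (dcount (a :: b :: t))
      = g (dcount (b :: t)) + ((q : ℝ) - 1) * g (dcount (b :: t) + 1) := by
  have h : ∀ a : Fin q, g (dcount (a :: b :: t))
      = if a = b then g (dcount (b :: t)) else g (dcount (b :: t) + 1) := by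
    intro a
    rw [dcount_cons_cons]
    split_ifs with hab
    · simp
    · rw [add_comm]
  simp only [h]
  rw [Finset.sum_ite, Finset.sum_const, Finset.sum_const]
  have h1 : (Finset.univ.filter (fun x : Fin q => x = b)) = {b} := by
    ext x; simp
  have h2 : (Finset.univ.filter (fun x : Fin q => ¬ x = b)).card = q - 1 := by
    have : (Finset.univ.filter (fun x : Fin q => ¬ x = b)) = Finset.univ.erase b := by
      ext x; simp [eq_comm]
    rw [this, Finset.card_erase_of_mem (Finset.mem_univ b)]
    simp
  rw [h1, h2]
  simp only [Finset.card_singleton, one_smul, nsmul_eq_mul]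
  rw [Nat.cast_sub hq]
  push_cast
  ring

lemma pascal_step (Q t : ℝ) (m : ℕ) (g : ℕ → ℝ) :
    (∑ k ∈ range (m + 1), Q * (m.choose k : ℝ) * t ^ k * g k)
      + t * ∑ k ∈ range (m + 1), Q * (m.choose k : ℝ) * t ^ k * g (k + 1)
    = ∑ k ∈ range (m + 2), Q * ((m + 1).choose k : ℝ) * t ^ k * g k := by
  have h1 : ∑ k ∈ range (m + 2), Q * ((m + 1).choose k : ℝ) * t ^ k * g k
      = ∑ k ∈ range (m + 1), Q * ((m + 1).choose (k + 1) : ℝ) * t ^ (k + 1) * g (k + 1)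
        + Q * g 0 := by
    rw [Finset.sum_range_succ']
    simp
  have h2 : ∑ k ∈ range (m + 1), Q * (m.choose k : ℝ) * t ^ k * g k
      = ∑ k ∈ range m, Q * (m.choose (k + 1) : ℝ) * t ^ (k + 1) * g (k + 1) + Q * g 0 := by
    rw [Finset.sum_range_succ']
    simp
  have h3 : ∑ k ∈ range (m + 1), Q * (m.choose (k + 1) : ℝ) * t ^ (k + 1) * g (k + 1)
      = ∑ k ∈ range m, Q * (m.choose (k + 1) : ℝ) * t ^ (k + 1) * g (k + 1) := by
    rw [Finset.sum_range_succ, Nat.choose_succ_self]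
    simp
  have h4 : t * ∑ k ∈ range (m + 1), Q * (m.choose k : ℝ) * t ^ k * g (k + 1)
      = ∑ k ∈ range (m + 1), t * (Q * (m.choose k : ℝ) * t ^ k * g (k + 1)) :=
    Finset.mul_sum _ _ _
  have h5 : ∑ k ∈ range (m + 1), (Q * (m.choose (k + 1) : ℝ) * t ^ (k + 1) * g (k + 1)
        + t * (Q * (m.choose k : ℝ) * t ^ k * g (k + 1)))
      = ∑ k ∈ range (m + 1), Q * ((m + 1).choose (k + 1) : ℝ) * t ^ (k + 1) * g (k + 1) := by
    refine Finset.sum_congr rfl fun k _ => ?_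
    have hp : ((m + 1).choose (k + 1) : ℕ) = m.choose k + m.choose (k + 1) :=
      Nat.choose_succ_succ m k
    rw [hp]
    push_cast
    ring
  rw [Finset.sum_add_distrib] at h5
  rw [h1, h2, h4, ← h3]
  linarith [h5]

/-- run-census generating sum for words of length `m+1` over `Fin q` -/
lemma census (q : ℕ) (hq : 1 ≤ q) : ∀ (m : ℕ) (g : ℕ → ℝ),
    ∑ y ∈ Lset q (m + 1), g (dcount y)
      = ∑ k ∈ range (m + 1), (q : ℝ) * (m.choose k : ℝ) * ((q : ℝ) - 1) ^ k * g k
  | 0, g => by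
      rw [sum_Lset_succ]
      rw [show Lset q 0 = {([] : List (Fin q))} from rfl]
      rw [Finset.sum_singleton]
      simp [Finset.sum_const, Finset.card_univ]
  | m + 1, g => by
      rw [sum_Lset_succ]
      have key : ∀ l ∈ Lset q (m + 1), (∑ a : Fin q, g (dcount (a :: l)))
          = g (dcount l) + ((q : ℝ) - 1) * g (dcount l + 1) := by
        intro l hl
        have hlen : l.length = m + 1 := mem_Lset.mp hl
        cases l with
        | nil => simp at hlen
        | cons b t => exact sum_fin_cons q hq g b t
      rw [Finset.sum_congr rfl key, Finset.sum_add_distrib]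
      have hmul : ∑ l ∈ Lset q (m + 1), ((q : ℝ) - 1) * g (dcount l + 1)
          = ((q : ℝ) - 1) * ∑ l ∈ Lset q (m + 1), g (dcount l + 1) :=
        (Finset.mul_sum _ _ _).symm
      rw [hmul, census q hq m g, census q hq m (fun k => g (k + 1))]
      exact pascal_step (q : ℝ) ((q : ℝ) - 1) m g

lemma bin0 (x : ℝ) (M : ℕ) :
    ∑ j ∈ range (M + 1), (M.choose j : ℝ) * x ^ j = (x + 1) ^ M := by
  rw [add_pow]
  exact Finset.sum_congr rfl fun j hj => by ring

lemma bin1 (x : ℝ) (M : ℕ) :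
    ∑ j ∈ range (M + 2), (j : ℝ) * ((M + 1).choose j : ℝ) * x ^ j
      = (M + 1) * x * (x + 1) ^ M := by
  rw [Finset.sum_range_succ']
  simp only [Nat.cast_zero, zero_mul, add_zero]
  have h : ∀ i ∈ range (M + 1),
      ((i + 1 : ℕ) : ℝ) * ((M + 1).choose (i + 1) : ℝ) * x ^ (i + 1)
        = ((M : ℝ) + 1) * x * ((M.choose i : ℝ) * x ^ i) := by
    intro i _
    have hn : (M + 1) * M.choose i = (M + 1).choose (i + 1) * (i + 1) :=
      Nat.add_one_mul_choose_eq M i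
    have hr : ((M : ℝ) + 1) * (M.choose i : ℝ)
        = ((M + 1).choose (i + 1) : ℝ) * ((i : ℝ) + 1) := by exact_mod_cast hn
    push_cast
    linear_combination (-(x ^ (i + 1))) * hr
  rw [Finset.sum_congr rfl h, ← Finset.mul_sum, bin0]

lemma bin2 (x : ℝ) (M : ℕ) :
    ∑ j ∈ range (M + 3), (j : ℝ) * ((j : ℝ) - 1) * ((M + 2).choose j : ℝ) * x ^ j
      = (M + 2) * (M + 1) * x ^ 2 * (x + 1) ^ M := by
  rw [Finset.sum_range_succ']
  simp only [Nat.cast_zero, zero_mul, add_zero]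
  have h : ∀ i ∈ range (M + 2),
      ((i + 1 : ℕ) : ℝ) * (((i + 1 : ℕ) : ℝ) - 1) * ((M + 2).choose (i + 1) : ℝ) * x ^ (i + 1)
        = ((M : ℝ) + 2) * x * ((i : ℝ) * ((M + 1).choose i : ℝ) * x ^ i) := by
    intro i _
    have hn : (M + 2) * (M + 1).choose i = (M + 2).choose (i + 1) * (i + 1) :=
      Nat.add_one_mul_choose_eq (M + 1) i
    have hr : ((M : ℝ) + 2) * ((M + 1).choose i : ℝ)
        = ((M + 2).choose (i + 1) : ℝ) * ((i : ℝ) + 1) := by exact_mod_cast hn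
    push_cast
    linear_combination (-((i : ℝ) * x ^ (i + 1))) * hr
  rw [Finset.sum_congr rfl h, ← Finset.mul_sum, bin1]
  ring

lemma choose_id (K k : ℕ) :
    K.choose k * ((K + 1) * (K + 2) * (K + 3))
      = (K + 3).choose (k + 3) * ((k + 1) * (k + 2) * (k + 3)) := by
  have h1 : ((K : ℤ) + 1) * K.choose k = (K + 1).choose (k + 1) * ((k : ℤ) + 1) := by
    exact_mod_cast Nat.add_one_mul_choose_eq K k
  have h2 : ((K : ℤ) + 2) * (K + 1).choose (k + 1) = (K + 2).choose (k + 2) * ((k : ℤ) + 2) := by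
    exact_mod_cast Nat.add_one_mul_choose_eq (K + 1) (k + 1)
  have h3 : ((K : ℤ) + 3) * (K + 2).choose (k + 2) = (K + 3).choose (k + 3) * ((k : ℤ) + 3) := by
    exact_mod_cast Nat.add_one_mul_choose_eq (K + 2) (k + 2)
  have : (K.choose k : ℤ) * ((K + 1) * (K + 2) * (K + 3))
      = ((K + 3).choose (k + 3) : ℤ) * ((k + 1) * (k + 2) * (k + 3)) := by
    linear_combination ((K : ℤ) + 2) * ((K : ℤ) + 3) * h1
      + (((k : ℤ) + 1) * ((K : ℤ) + 3)) * h2 + (((k : ℤ) + 1) * ((k : ℤ) + 2)) * h3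
  exact_mod_cast this

lemma key_sum (t : ℝ) (ht : 0 < t) (K : ℕ) :
    (∑ k ∈ range (K + 1), (K.choose k : ℝ) * t ^ k * (1 / ((k : ℝ) + 3)))
      * (((K : ℝ) + 1) * ((K : ℝ) + 2) * ((K : ℝ) + 3)) * t ^ 3
    = ((K : ℝ) + 3) * ((K : ℝ) + 2) * t ^ 2 * (t + 1) ^ (K + 1)
      - 2 * ((K : ℝ) + 3) * t * (t + 1) ^ (K + 2) + 2 * (t + 1) ^ (K + 3) - 2 := by
  have step1 : (∑ k ∈ range (K + 1), (K.choose k : ℝ) * t ^ k * (1 / ((k : ℝ) + 3)))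
      * (((K : ℝ) + 1) * ((K : ℝ) + 2) * ((K : ℝ) + 3)) * t ^ 3
      = ∑ k ∈ range (K + 1),
          ((((k + 3 : ℕ)) : ℝ) - 1) * ((((k + 3 : ℕ)) : ℝ) - 2)
            * (((K + 3).choose (k + 3) : ℝ)) * t ^ (k + 3) := by
    rw [Finset.sum_mul, Finset.sum_mul]
    refine Finset.sum_congr rfl fun k _ => ?_
    have hr : (K.choose k : ℝ) * (((K : ℝ) + 1) * ((K : ℝ) + 2) * ((K : ℝ) + 3))
        = ((K + 3).choose (k + 3) : ℝ) * (((k : ℝ) + 1) * ((k : ℝ) + 2) * ((k : ℝ) + 3)) := by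
      exact_mod_cast choose_id K k
    have hne : ((k : ℝ) + 3) ≠ 0 := by positivity
    push_cast
    field_simp
    linear_combination t ^ (k + 3) * hr
  rw [step1]
  have hF : ∑ k ∈ range (K + 1),
        ((((k + 3 : ℕ)) : ℝ) - 1) * ((((k + 3 : ℕ)) : ℝ) - 2)
          * (((K + 3).choose (k + 3) : ℝ)) * t ^ (k + 3)
      = (∑ j ∈ range (K + 4),
          ((j : ℝ) - 1) * ((j : ℝ) - 2) * (((K + 3).choose j : ℝ)) * t ^ j) - 2 := by
    have e1 := Finset.sum_range_succ' (fun j => ((j : ℝ) - 1) * ((j : ℝ) - 2)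
      * (((K + 3).choose j : ℝ)) * t ^ j) (K + 3)
    have e2 := Finset.sum_range_succ' (fun j => ((((j + 1 : ℕ)) : ℝ) - 1) * ((((j + 1 : ℕ)) : ℝ) - 2)
      * (((K + 3).choose (j + 1) : ℝ)) * t ^ (j + 1)) (K + 2)
    have e3 := Finset.sum_range_succ' (fun j => ((((j + 2 : ℕ)) : ℝ) - 1) * ((((j + 2 : ℕ)) : ℝ) - 2)
      * (((K + 3).choose (j + 2) : ℝ)) * t ^ (j + 2)) (K + 1)
    rw [e1, e2, e3]
    push_cast
    ring_nf
    norm_num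
    refine Finset.sum_congr rfl fun x hx => by push_cast; ring
  rw [hF]
  have hsplit : ∀ j ∈ range (K + 4),
      ((j : ℝ) - 1) * ((j : ℝ) - 2) * (((K + 3).choose j : ℝ)) * t ^ j
        = ((j : ℝ) * ((j : ℝ) - 1) * (((K + 3).choose j : ℝ)) * t ^ j)
          - 2 * ((j : ℝ) * (((K + 3).choose j : ℝ)) * t ^ j)
          + 2 * ((((K + 3).choose j : ℝ)) * t ^ j) := fun j _ => by ring
  rw [Finset.sum_congr rfl hsplit]
  rw [Finset.sum_add_distrib, Finset.sum_sub_distrib]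
  have hb2 : ∑ j ∈ range (K + 4), (j : ℝ) * ((j : ℝ) - 1) * (((K + 3).choose j : ℝ)) * t ^ j
      = ((K : ℝ) + 3) * ((K : ℝ) + 2) * t ^ 2 * (t + 1) ^ (K + 1) := by
    have := bin2 t (K + 1)
    push_cast at this ⊢
    convert this using 2 <;> try ring
  have hb1 : ∑ j ∈ range (K + 4), (j : ℝ) * (((K + 3).choose j : ℝ)) * t ^ j
      = ((K : ℝ) + 3) * t * (t + 1) ^ (K + 2) := by
    have := bin1 t (K + 2)
    push_cast at this ⊢
    convert this using 2 <;> try ring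
  have hb0 : ∑ j ∈ range (K + 4), (((K + 3).choose j : ℝ)) * t ^ j = (t + 1) ^ (K + 3) := by
    have := bin0 t (K + 3)
    convert this using 2
  rw [← Finset.mul_sum, ← Finset.mul_sum, hb2, hb1, hb0]
  ring

lemma sum_biUnion_le {ι α : Type*} [DecidableEq α] (s : Finset ι) (D : ι → Finset α)
    (w : α → ℝ) (hw : ∀ a, 0 ≤ w a) :
    ∑ x ∈ s.biUnion D, w x ≤ ∑ i ∈ s, ∑ x ∈ D i, w x := by
  classical
  induction s using Finset.induction with
  | empty => simp
  | @insert a s ha ih =>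
      rw [Finset.biUnion_insert, Finset.sum_insert ha]
      have hu : ∑ x ∈ D a ∪ s.biUnion D, w x ≤ ∑ x ∈ D a, w x + ∑ x ∈ s.biUnion D, w x := by
        have := Finset.sum_union_inter (s₁ := D a) (s₂ := s.biUnion D) (f := w)
        have hnn : 0 ≤ ∑ x ∈ D a ∩ s.biUnion D, w x := Finset.sum_nonneg fun x _ => hw x
        linarith
      linarith [ih]

/-- Sphere-covering lower bound for single-deletion-covering codes:
every single-deletion-covering code `C ⊆ Σ_q^n` satisfies
`|C| ≥ q^n (n-2) / ((q-1) n (n+1))`. -/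
theorem single_deletion_covering_lower_bound (q n : ℕ) (hq : 2 ≤ q) (hn : 2 ≤ n)
    (C : Finset (List (Fin q)))
    (hlen : ∀ c ∈ C, c.length = n)
    (hcov : ∀ y : List (Fin q), y.length = n - 1 → ∃ c ∈ C, y.Sublist c) :
    (q : ℝ) ^ n * ((n : ℝ) - 2) / (((q : ℝ) - 1) * (n : ℝ) * ((n : ℝ) + 1))
      ≤ (C.card : ℝ) := by
  classical
  obtain ⟨K, rfl⟩ : ∃ K, n = K + 2 := ⟨n - 2, by omega⟩
  have hq1 : (1 : ℕ) ≤ q := by omega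
  set Q : ℝ := (q : ℝ) with hQ
  have hQ2 : (2 : ℝ) ≤ Q := by rw [hQ]; exact_mod_cast hq
  set t : ℝ := Q - 1 with hts
  have ht1 : (1 : ℝ) ≤ t := by simp only [hts]; linarith
  have ht : (0 : ℝ) < t := lt_of_lt_of_le one_pos ht1
  have htQ : t + 1 = Q := by simp [hts]
  -- the weight function
  set w : List (Fin q) → ℝ := fun y => 1 / ((dcount y : ℝ) + 3) with hw
  have hw0 : ∀ y, 0 ≤ w y := fun y => by positivity
  -- Step 1 : the covering bound  ∑_{|y| = n-1} w y ≤ |C|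
  have cover : ∑ y ∈ Lset q (K + 1), w y ≤ (C.card : ℝ) := by
    have covC : Lset q (K + 1)
        ⊆ C.biUnion (fun c => (Lset q (K + 1)).filter (fun y => y.Sublist c)) := by
      intro y hy
      obtain ⟨c, hcC, hsub⟩ := hcov y (by rw [mem_Lset.mp hy]; omega)
      exact Finset.mem_biUnion.mpr ⟨c, hcC, Finset.mem_filter.mpr ⟨hy, hsub⟩⟩
    have percb : ∀ c ∈ C, ∑ y ∈ (Lset q (K + 1)).filter (fun y => y.Sublist c), w y ≤ 1 := by
      intro c hc
      have hlc : c.length = K + 2 := hlen c hc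
      have hcne : c ≠ [] := by intro h; rw [h] at hlc; simp at hlc
      have hsub2 : (Lset q (K + 1)).filter (fun y => y.Sublist c) ⊆ Dset c := by
        intro y hy
        obtain ⟨hyL, hys⟩ := Finset.mem_filter.mp hy
        obtain ⟨i, hi, hyi⟩ := sublist_eq_eraseIdx hys (by rw [mem_Lset.mp hyL, hlc])
        exact Finset.mem_image.mpr ⟨i, Finset.mem_range.mpr hi, hyi.symm⟩
      have hterm : ∀ y ∈ Dset c, w y ≤ 1 / ((dcount c : ℝ) + 1) := by
        intro y hy
        obtain ⟨i, _, rfl⟩ := Finset.mem_image.mp hy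
        have hd : dcount c ≤ dcount (c.eraseIdx i) + 2 := dcount_le_eraseIdx c i
        have : ((dcount c : ℝ)) + 1 ≤ (dcount (c.eraseIdx i) : ℝ) + 3 := by
          exact_mod_cast by omega
        rw [hw]
        apply one_div_le_one_div_of_le
        · positivity
        · exact this
      calc ∑ y ∈ (Lset q (K + 1)).filter (fun y => y.Sublist c), w y
          ≤ ∑ y ∈ Dset c, w y :=
            Finset.sum_le_sum_of_subset_of_nonneg hsub2 (fun y _ _ => hw0 y)
        _ ≤ ∑ _y ∈ Dset c, 1 / ((dcount c : ℝ) + 1) := Finset.sum_le_sum hterm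
        _ = ((Dset c).card : ℝ) * (1 / ((dcount c : ℝ) + 1)) := by
            rw [Finset.sum_const, nsmul_eq_mul]
        _ ≤ ((dcount c : ℝ) + 1) * (1 / ((dcount c : ℝ) + 1)) := by
            apply mul_le_mul_of_nonneg_right _ (by positivity)
            exact_mod_cast card_Dset_le c hcne
        _ = 1 := by
            field_simp
    calc ∑ y ∈ Lset q (K + 1), w y
        ≤ ∑ y ∈ C.biUnion (fun c => (Lset q (K + 1)).filter (fun y => y.Sublist c)), w y :=
          Finset.sum_le_sum_of_subset_of_nonneg covC (fun y _ _ => hw0 y)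
      _ ≤ ∑ c ∈ C, ∑ y ∈ (Lset q (K + 1)).filter (fun y => y.Sublist c), w y :=
          sum_biUnion_le _ _ _ hw0
      _ ≤ ∑ _c ∈ C, (1 : ℝ) := Finset.sum_le_sum percb
      _ = (C.card : ℝ) := by simp
  -- Step 2 : census evaluation of the weight sum
  set A : ℝ := ∑ k ∈ range (K + 1), (K.choose k : ℝ) * t ^ k * (1 / ((k : ℝ) + 3)) with hA
  have cens : ∑ y ∈ Lset q (K + 1), w y = Q * A := by
    have := census q hq1 K (fun k => 1 / ((k : ℝ) + 3))
    rw [hw]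
    simp only [← hQ, ← hts] at this
    rw [this, hA, Finset.mul_sum]
    exact Finset.sum_congr rfl fun k _ => by ring
  -- Step 3 : the binomial-sum lower bound
  set P : ℝ := ((K : ℝ) + 1) * ((K : ℝ) + 2) * ((K : ℝ) + 3) with hP
  have hks : A * P * t ^ 3
      = ((K : ℝ) + 3) * ((K : ℝ) + 2) * t ^ 2 * Q ^ (K + 1)
        - 2 * ((K : ℝ) + 3) * t * Q ^ (K + 2) + 2 * Q ^ (K + 3) - 2 := by
    rw [hA, hP, ← htQ]
    exact key_sum t ht K
  -- lower bound on the RHS of hks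
  have hQpow : (1 : ℝ) ≤ Q ^ (K + 1) := one_le_pow₀ (by linarith)
  have hKnn : (0 : ℝ) ≤ (K : ℝ) := Nat.cast_nonneg K
  have hE2 : (K : ℝ) * ((K : ℝ) + 1) * t ^ 2 * Q ^ (K + 1) ≤ A * P * t ^ 3 := by
    rw [hks]
    have hfact : ((K : ℝ) + 3) * ((K : ℝ) + 2) * t ^ 2 * Q ^ (K + 1)
          - 2 * ((K : ℝ) + 3) * t * Q ^ (K + 2) + 2 * Q ^ (K + 3)
          - (K : ℝ) * ((K : ℝ) + 1) * t ^ 2 * Q ^ (K + 1)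
        = Q ^ (K + 1) * (2 * ((K : ℝ) + 1) * t * (t - 1) + 2) := by
      rw [← htQ]
      ring
    have hbr : (2 : ℝ) ≤ 2 * ((K : ℝ) + 1) * t * (t - 1) + 2 := by
      have : (0 : ℝ) ≤ 2 * ((K : ℝ) + 1) * t * (t - 1) :=
        mul_nonneg (by positivity) (by linarith)
      linarith
    have h2 : (2 : ℝ) ≤ Q ^ (K + 1) * (2 * ((K : ℝ) + 1) * t * (t - 1) + 2) := by
      nlinarith [hQpow, hbr]
    linarith [hfact, h2]
  have hfin : Q ^ (K + 2) * (K : ℝ) / (t * ((K : ℝ) + 2) * ((K : ℝ) + 3)) ≤ Q * A := by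
    rw [div_le_iff₀ (by positivity)]
    have hmul : Q ^ (K + 2) * (K : ℝ) * (t ^ 2 * ((K : ℝ) + 1))
        ≤ (Q * A * (t * ((K : ℝ) + 2) * ((K : ℝ) + 3))) * (t ^ 2 * ((K : ℝ) + 1)) := by
      have e1 : (Q * A * (t * ((K : ℝ) + 2) * ((K : ℝ) + 3))) * (t ^ 2 * ((K : ℝ) + 1))
          = Q * (A * P * t ^ 3) := by rw [hP]; ring
      have e2 : Q ^ (K + 2) * (K : ℝ) * (t ^ 2 * ((K : ℝ) + 1))
          = Q * ((K : ℝ) * ((K : ℝ) + 1) * t ^ 2 * Q ^ (K + 1)) := by ring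
      rw [e1, e2]
      exact mul_le_mul_of_nonneg_left hE2 (by linarith)
    exact le_of_mul_le_mul_right hmul (by positivity)
  have hgoal : (q : ℝ) ^ (K + 2) * (((K + 2 : ℕ) : ℝ) - 2)
        / (((q : ℝ) - 1) * ((K + 2 : ℕ) : ℝ) * (((K + 2 : ℕ) : ℝ) + 1))
      = Q ^ (K + 2) * (K : ℝ) / (t * ((K : ℝ) + 2) * ((K : ℝ) + 3)) := by
    rw [← hQ, ← hts]
    push_cast
    ring_nf
  calc (q : ℝ) ^ (K + 2) * (((K + 2 : ℕ) : ℝ) - 2)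
        / (((q : ℝ) - 1) * ((K + 2 : ℕ) : ℝ) * (((K + 2 : ℕ) : ℝ) + 1))
      = Q ^ (K + 2) * (K : ℝ) / (t * ((K : ℝ) + 2) * ((K : ℝ) + 3)) := hgoal
    _ ≤ Q * A := hfin
    _ = ∑ y ∈ Lset q (K + 1), w y := cens.symm
    _ ≤ (C.card : ℝ) := cover
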